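/- Let p = (p₁ ≥ ... ≥ p_r > 0) be a partition of N and f ∈ gl_N the associated shift nilpotent. For 1 ≤ i,j ≤ r and 0 ≤ k ≤ min(p_i,p_j)−1, define f_{ij;k} = Σ_{h=0}^{k} E_{(i, p_i + h − k),(j, h+1)}. Then: (a) each f_{ij;k} lies in the centralizer g^f = {x ∈ gl_N : [f,x] = 0}; (b) the elements f_{ij;k} form a basis of g^f dual to the basis {E_{(j,1),(i,p_i−k)}} of U with respect to the trace form, i.e., tr(E_{(j,1),(i,p_i−k)} · f_{i'j';k'}) = δ_{ii'} δ_{jj'} δ_{kk'}. -/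

import Mathlib

open Matrix

/-- Index set of the pyramid attached to the partition `p` (0-based). -/
abbrev GIdx {r : ℕ} (p : Fin r → ℕ) : Type := (i : Fin r) × Fin (p i)

/-- The shift nilpotent `f = Σ_{(i,h): h < pᵢ} E_{(i,h+1),(i,h)}`. -/
def shiftNil (F : Type*) [Field F] {r : ℕ} (p : Fin r → ℕ) :
    Matrix (GIdx p) (GIdx p) F :=
  Matrix.of fun x y => if x.1 = y.1 ∧ (x.2 : ℕ) = (y.2 : ℕ) + 1 then 1 else 0

/-- The element `f_{ij;k} = Σ_{h=0}^{k} E_{(i, pᵢ+h−k),(j, h+1)}` (0-based indices). -/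
def fEl (F : Type*) [Field F] {r : ℕ} (p : Fin r → ℕ) (i j : Fin r) (k : ℕ)
    (hk : k < min (p i) (p j)) : Matrix (GIdx p) (GIdx p) F :=
  ∑ h : Fin (k + 1),
    Matrix.single
      ⟨i, ⟨p i - 1 - k + (h : ℕ), by have := h.isLt; omega⟩⟩
      ⟨j, ⟨(h : ℕ), by have := h.isLt; omega⟩⟩ 1

/-- The basis element `E_{(j,1),(i,pᵢ−k)}` of `U` (0-based indices). -/
def uEl (F : Type*) [Field F] {r : ℕ} (p : Fin r → ℕ) (i j : Fin r) (k : ℕ)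
    (hk : k < min (p i) (p j)) : Matrix (GIdx p) (GIdx p) F :=
  Matrix.single ⟨j, ⟨0, by omega⟩⟩ ⟨i, ⟨p i - 1 - k, by omega⟩⟩ 1

section Helpers

variable {F : Type*} [Field F] {r : ℕ} {p : Fin r → ℕ}

lemma gid_iff {a c : Fin r} {b : Fin (p a)} {d : Fin (p c)} :
    (⟨a, b⟩ : GIdx p) = ⟨c, d⟩ ↔ a = c ∧ (b : ℕ) = (d : ℕ) := by
  constructor
  · intro h
    injection h with h1 h2
    subst h1
    exact ⟨rfl, congrArg Fin.val (eq_of_heq h2)⟩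
  · rintro ⟨rfl, h2⟩; exact congrArg _ (Fin.ext h2)

lemma sbm_apply (u v x y : GIdx p) (c : F) :
    Matrix.single u v c x y = if u = x ∧ v = y then c else 0 := rfl

lemma shiftNil_apply (x y : GIdx p) :
    shiftNil F p x y = if x.1 = y.1 ∧ (x.2 : ℕ) = (y.2 : ℕ) + 1 then 1 else 0 := rfl

lemma xcongr (x : Matrix (GIdx p) (GIdx p) F) {i j : Fin r} {a a' b b' : ℕ}
    (ha : a < p i) (ha' : a' < p i) (hb : b < p j) (hb' : b' < p j)
    (e1 : a = a') (e2 : b = b') :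
    x ⟨i, ⟨a, ha⟩⟩ ⟨j, ⟨b, hb⟩⟩ = x ⟨i, ⟨a', ha'⟩⟩ ⟨j, ⟨b', hb'⟩⟩ := by
  subst e1; subst e2; rfl

lemma fEl_apply (i j : Fin r) (k : ℕ) (hk : k < min (p i) (p j)) (x y : GIdx p) :
    fEl F p i j k hk x y =
      if x.1 = i ∧ y.1 = j ∧ (y.2 : ℕ) ≤ k ∧ (x.2 : ℕ) = p i - 1 - k + (y.2 : ℕ)
      then 1 else 0 := by
  obtain ⟨x1, x2⟩ := x; obtain ⟨y1, y2⟩ := y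
  unfold fEl
  rw [Matrix.sum_apply]
  simp only [sbm_apply, gid_iff]
  by_cases hc : x1 = i ∧ y1 = j ∧ (y2 : ℕ) ≤ k ∧ (x2 : ℕ) = p i - 1 - k + (y2 : ℕ)
  · obtain ⟨h1, h2, h3, h4⟩ := hc
    rw [if_pos ⟨h1, h2, h3, h4⟩]
    rw [Fintype.sum_eq_single (⟨(y2 : ℕ), by omega⟩ : Fin (k + 1))]
    · rw [if_pos ⟨⟨h1.symm, by simp [h4]⟩, ⟨h2.symm, rfl⟩⟩]
    · intro b hb
      rw [if_neg]
      rintro ⟨⟨e1, e2⟩, ⟨e3, e4⟩⟩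
      exact hb (Fin.ext (by simpa using e4))
  · rw [if_neg hc]
    apply Finset.sum_eq_zero
    intro b _
    rw [if_neg]
    rintro ⟨⟨e1, e2⟩, ⟨e3, e4⟩⟩
    have hbl := b.isLt
    exact hc ⟨e1.symm, e3.symm, by omega, by omega⟩

lemma shift_mul_apply (M : Matrix (GIdx p) (GIdx p) F) (u v : GIdx p) :
    (shiftNil F p * M) u v =
      if h : 0 < (u.2 : ℕ) then
        M ⟨u.1, ⟨(u.2 : ℕ) - 1, by have := u.2.isLt; omega⟩⟩ v else 0 := by
  rw [Matrix.mul_apply]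
  split
  · rename_i h
    rw [Fintype.sum_eq_single (⟨u.1, ⟨(u.2 : ℕ) - 1, by have := u.2.isLt; omega⟩⟩ : GIdx p)]
    · rw [shiftNil_apply, if_pos ⟨rfl, by simp; omega⟩, one_mul]
    · intro w hw
      obtain ⟨w1, w2⟩ := w
      rw [shiftNil_apply]
      by_cases hc : u.1 = w1 ∧ (u.2 : ℕ) = (w2 : ℕ) + 1
      · exact absurd (gid_iff.mpr ⟨hc.1.symm,
          show (w2 : ℕ) = (u.2 : ℕ) - 1 by omega⟩) hw
      · rw [if_neg hc, zero_mul]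
  · rename_i h
    apply Finset.sum_eq_zero
    intro w _
    rw [shiftNil_apply, if_neg, zero_mul]
    rintro ⟨e1, e2⟩
    omega

lemma mul_shift_apply (M : Matrix (GIdx p) (GIdx p) F) (u v : GIdx p) :
    (M * shiftNil F p) u v =
      if h : (v.2 : ℕ) + 1 < p v.1 then M u ⟨v.1, ⟨(v.2 : ℕ) + 1, h⟩⟩ else 0 := by
  rw [Matrix.mul_apply]
  split
  · rename_i h
    rw [Fintype.sum_eq_single (⟨v.1, ⟨(v.2 : ℕ) + 1, h⟩⟩ : GIdx p)]
    · rw [shiftNil_apply, if_pos ⟨rfl, rfl⟩, mul_one]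
    · intro w hw
      obtain ⟨w1, w2⟩ := w
      rw [shiftNil_apply]
      by_cases hc : w1 = v.1 ∧ (w2 : ℕ) = (v.2 : ℕ) + 1
      · exact absurd (gid_iff.mpr ⟨hc.1,
          show (w2 : ℕ) = (v.2 : ℕ) + 1 from hc.2⟩) hw
      · rw [if_neg hc, mul_zero]
  · rename_i h
    apply Finset.sum_eq_zero
    intro w _
    obtain ⟨w1, w2⟩ := w
    rw [shiftNil_apply, if_neg, mul_zero]
    rintro ⟨e1, e2⟩
    have e1' : w1 = v.fst := e1
    have e2' : (w2 : ℕ) = (v.snd : ℕ) + 1 := e2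
    subst e1'
    have hl : (w2 : ℕ) < p v.fst := w2.isLt
    omega

variable {x : Matrix (GIdx p) (GIdx p) F}

lemma rel1 (hx : shiftNil F p * x = x * shiftNil F p) (i j : Fin r) (a b : ℕ)
    (ha : a + 1 < p i) (hb : b + 1 < p j) :
    x ⟨i, ⟨a + 1, ha⟩⟩ ⟨j, ⟨b + 1, hb⟩⟩ = x ⟨i, ⟨a, by omega⟩⟩ ⟨j, ⟨b, by omega⟩⟩ := by
  have h := congrFun (congrFun hx ⟨i, ⟨a + 1, ha⟩⟩) ⟨j, ⟨b, by omega⟩⟩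
  rw [shift_mul_apply, mul_shift_apply] at h
  rw [dif_pos (Nat.succ_pos a), dif_pos hb] at h
  exact h.symm

lemma rel2 (hx : shiftNil F p * x = x * shiftNil F p) (i j : Fin r) (a : ℕ)
    (ha : a + 1 < p i) (hj : 0 < p j) :
    x ⟨i, ⟨a, by omega⟩⟩ ⟨j, ⟨p j - 1, by omega⟩⟩ = 0 := by
  have h := congrFun (congrFun hx ⟨i, ⟨a + 1, ha⟩⟩) ⟨j, ⟨p j - 1, by omega⟩⟩
  rw [shift_mul_apply, mul_shift_apply] at h
  rw [dif_pos (Nat.succ_pos a), dif_neg (by simp; omega)] at h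
  exact h

lemma rel3 (hx : shiftNil F p * x = x * shiftNil F p) (i j : Fin r) (b : ℕ)
    (hi : 0 < p i) (hb : b + 1 < p j) :
    x ⟨i, ⟨0, hi⟩⟩ ⟨j, ⟨b + 1, hb⟩⟩ = 0 := by
  have h := congrFun (congrFun hx ⟨i, ⟨0, hi⟩⟩) ⟨j, ⟨b, by omega⟩⟩
  rw [shift_mul_apply, mul_shift_apply] at h
  rw [dif_neg (by simp), dif_pos hb] at h
  exact h.symm

lemma down (hx : shiftNil F p * x = x * shiftNil F p) :
    ∀ (t : ℕ) (i j : Fin r) (a b : ℕ) (ha : a < p i) (hb : b < p j),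
      t ≤ a → t ≤ b →
      x ⟨i, ⟨a, ha⟩⟩ ⟨j, ⟨b, hb⟩⟩ =
        x ⟨i, ⟨a - t, by omega⟩⟩ ⟨j, ⟨b - t, by omega⟩⟩ := by
  intro t
  induction t with
  | zero => intro i j a b ha hb _ _; rfl
  | succ t ih =>
    intro i j a b ha hb hta htb
    rw [ih i j a b ha hb (by omega) (by omega)]
    have e : x ⟨i, ⟨a - t, by omega⟩⟩ ⟨j, ⟨b - t, by omega⟩⟩ =
        x ⟨i, ⟨(a - (t + 1)) + 1, by omega⟩⟩ ⟨j, ⟨(b - (t + 1)) + 1, by omega⟩⟩ :=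
      xcongr x _ _ _ _ (by omega) (by omega)
    rw [e, rel1 hx i j (a - (t + 1)) (b - (t + 1)) (by omega) (by omega)]

lemma zero_of (hx : shiftNil F p * x = x * shiftNil F p) (hp : ∀ i, 0 < p i)
    (htop : ∀ (i j : Fin r) (b : ℕ) (hb : b < min (p i) (p j)),
      x ⟨i, ⟨p i - 1, by have := hp i; omega⟩⟩ ⟨j, ⟨b, by omega⟩⟩ = 0) :
    x = 0 := by
  have htop' : ∀ (i j : Fin r) (b : ℕ) (hb : b < p j),
      x ⟨i, ⟨p i - 1, by have := hp i; omega⟩⟩ ⟨j, ⟨b, hb⟩⟩ = 0 := by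
    intro i j b hb
    by_cases hbm : b < min (p i) (p j)
    · exact htop i j b hbm
    · have hbi : p i ≤ b := by omega
      have hpi := hp i
      have hpj := hp j
      rw [down hx (p i - 1) i j (p i - 1) b (by have := hp i; omega) hb le_rfl (by omega)]
      have e : x ⟨i, ⟨p i - 1 - (p i - 1), by have := hp i; omega⟩⟩
            ⟨j, ⟨b - (p i - 1), by omega⟩⟩ =
          x ⟨i, ⟨0, hp i⟩⟩ ⟨j, ⟨(b - p i) + 1, by omega⟩⟩ :=
        xcongr x _ _ _ _ (by omega) (by omega)
      rw [e, rel3 hx i j (b - p i) (hp i) (by omega)]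
  have main : ∀ (d : ℕ) (i j : Fin r) (a b : ℕ) (ha : a < p i) (hb : b < p j),
      p i - 1 - a ≤ d → x ⟨i, ⟨a, ha⟩⟩ ⟨j, ⟨b, hb⟩⟩ = 0 := by
    intro d
    induction d with
    | zero =>
      intro i j a b ha hb hd
      have e : x ⟨i, ⟨a, ha⟩⟩ ⟨j, ⟨b, hb⟩⟩ =
          x ⟨i, ⟨p i - 1, by have := hp i; omega⟩⟩ ⟨j, ⟨b, hb⟩⟩ :=
        xcongr x _ _ _ _ (by omega) rfl
      rw [e]; exact htop' i j b hb
    | succ d ih =>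
      intro i j a b ha hb hd
      by_cases h1 : p i - 1 - a ≤ d
      · exact ih i j a b ha hb h1
      · have ha1 : a + 1 < p i := by omega
        by_cases h2 : b + 1 < p j
        · rw [← rel1 hx i j a b ha1 h2]
          exact ih i j (a + 1) (b + 1) ha1 h2 (by omega)
        · have e : x ⟨i, ⟨a, ha⟩⟩ ⟨j, ⟨b, hb⟩⟩ =
              x ⟨i, ⟨a, by omega⟩⟩ ⟨j, ⟨p j - 1, by have := hp j; omega⟩⟩ :=
            xcongr x _ _ _ _ rfl (by omega)
          rw [e]; exact rel2 hx i j a ha1 (hp j)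
  ext u v
  obtain ⟨i, a⟩ := u; obtain ⟨j, b⟩ := v
  rw [Matrix.zero_apply]
  exact main (p i) i j a b a.isLt b.isLt (by omega)

lemma fEl_comm (i j : Fin r) (k : ℕ) (hk : k < min (p i) (p j)) :
    shiftNil F p * fEl F p i j k hk = fEl F p i j k hk * shiftNil F p := by
  have hki : k < p i := lt_of_lt_of_le hk (min_le_left _ _)
  have hkj : k < p j := lt_of_lt_of_le hk (min_le_right _ _)
  ext u v
  obtain ⟨i', a⟩ := u; obtain ⟨j', b⟩ := v
  rw [shift_mul_apply, mul_shift_apply]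
  have hal := a.isLt
  have hbl := b.isLt
  by_cases h1 : 0 < (a : ℕ)
  · rw [dif_pos h1]
    by_cases h2 : (b : ℕ) + 1 < p j'
    · rw [dif_pos h2, fEl_apply, fEl_apply]
      by_cases hi : i' = i
      · by_cases hj : j' = j
        · have hal' : (a : ℕ) < p i := by rw [← hi]; exact hal
          have hbl' : (b : ℕ) + 1 < p j := by rw [← hj]; exact h2
          refine if_congr ⟨?_, ?_⟩ rfl rfl
          · rintro ⟨-, -, e3, e4⟩
            have e3' : (b : ℕ) ≤ k := e3
            have e4' : (a : ℕ) - 1 = p i - 1 - k + (b : ℕ) := e4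
            exact ⟨hi, hj, show (b : ℕ) + 1 ≤ k by omega,
              show (a : ℕ) = p i - 1 - k + ((b : ℕ) + 1) by omega⟩
          · rintro ⟨-, -, e3, e4⟩
            have e3' : (b : ℕ) + 1 ≤ k := e3
            have e4' : (a : ℕ) = p i - 1 - k + ((b : ℕ) + 1) := e4
            exact ⟨hi, hj, show (b : ℕ) ≤ k by omega,
              show (a : ℕ) - 1 = p i - 1 - k + (b : ℕ) by omega⟩
        · rw [if_neg (by rintro ⟨-, e, -, -⟩; exact hj e),
              if_neg (by rintro ⟨-, e, -, -⟩; exact hj e)]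
      · rw [if_neg (by rintro ⟨e, -, -, -⟩; exact hi e),
            if_neg (by rintro ⟨e, -, -, -⟩; exact hi e)]
    · rw [dif_neg h2, fEl_apply, if_neg]
      rintro ⟨hi, hj, e3, e4⟩
      have hi' : i' = i := hi
      have hj' : j' = j := hj
      have e3' : (b : ℕ) ≤ k := e3
      have e4' : (a : ℕ) - 1 = p i - 1 - k + (b : ℕ) := e4
      have hal' : (a : ℕ) < p i := by rw [← hi']; exact hal
      have hbl' : (b : ℕ) < p j := by rw [← hj']; exact hbl
      have h2' : ¬ ((b : ℕ) + 1 < p j) := by rw [← hj']; exact h2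
      omega
  · rw [dif_neg h1]
    by_cases h2 : (b : ℕ) + 1 < p j'
    · rw [dif_pos h2, fEl_apply, if_neg]
      rintro ⟨hi, hj, e3, e4⟩
      have hi' : i' = i := hi
      have e3' : (b : ℕ) + 1 ≤ k := e3
      have e4' : (a : ℕ) = p i - 1 - k + ((b : ℕ) + 1) := e4
      omega
    · rw [dif_neg h2]

lemma bigS_apply (x : Matrix (GIdx p) (GIdx p) F) (hp : ∀ i, 0 < p i)
    (i j : Fin r) (a : ℕ) (ha : a < p i) (b : ℕ) (hb : b < p j) :
    (∑ i' : Fin r, ∑ j' : Fin r, ∑ k : Fin (min (p i') (p j')),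
        x ⟨i', ⟨p i' - 1, by have := hp i'; omega⟩⟩
          ⟨j', ⟨(k : ℕ), by have := k.isLt; omega⟩⟩ • fEl F p i' j' (k : ℕ) k.isLt)
      ⟨i, ⟨a, ha⟩⟩ ⟨j, ⟨b, hb⟩⟩ =
      if h : b ≤ a ∧ p i - 1 - a + b < p j then
        x ⟨i, ⟨p i - 1, by have := hp i; omega⟩⟩
          ⟨j, ⟨p i - 1 - a + b, h.2⟩⟩
      else 0 := by
  have hal := ha
  have hbl := hb
  simp only [Matrix.sum_apply, Matrix.smul_apply, fEl_apply, smul_eq_mul]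
  split
  · rename_i h
    obtain ⟨hba, hpj⟩ := h
    rw [Fintype.sum_eq_single i]
    · rw [Fintype.sum_eq_single j]
      · rw [Fintype.sum_eq_single (⟨p i - 1 - (a : ℕ) + (b : ℕ), by omega⟩ :
            Fin (min (p i) (p j)))]
        · rw [mul_ite, mul_one, mul_zero]
          rw [if_pos]
          exact ⟨rfl, rfl, show (b : ℕ) ≤ p i - 1 - (a : ℕ) + (b : ℕ) by omega,
            show (a : ℕ) = p i - 1 - (p i - 1 - (a : ℕ) + (b : ℕ)) + (b : ℕ) by omega⟩
        · intro k hk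
          have hkl := k.isLt
          rw [mul_ite, mul_one, mul_zero, if_neg]
          rintro ⟨-, -, e3, e4⟩
          have e3' : (b : ℕ) ≤ (k : ℕ) := e3
          have e4' : (a : ℕ) = p i - 1 - (k : ℕ) + (b : ℕ) := e4
          exact hk (Fin.ext (show (k : ℕ) = p i - 1 - (a : ℕ) + (b : ℕ) by omega))
      · intro j' hj'
        apply Finset.sum_eq_zero
        intro k _
        rw [mul_ite, mul_one, mul_zero, if_neg]
        rintro ⟨-, e2, -, -⟩
        exact hj' e2.symm
    · intro i' hi'
      apply Finset.sum_eq_zero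
      intro j' _
      apply Finset.sum_eq_zero
      intro k _
      rw [mul_ite, mul_one, mul_zero, if_neg]
      rintro ⟨e1, -, -, -⟩
      exact hi' e1.symm
  · rename_i h
    apply Finset.sum_eq_zero
    intro i' _
    apply Finset.sum_eq_zero
    intro j' _
    apply Finset.sum_eq_zero
    intro k _
    rw [mul_ite, mul_one, mul_zero, if_neg]
    rintro ⟨e1, e2, e3, e4⟩
    have e3' : (b : ℕ) ≤ (k : ℕ) := e3
    have hkl : (k : ℕ) < min (p i) (p j) := by rw [e1, e2]; exact k.isLt
    have e4' : (a : ℕ) = p i - 1 - (k : ℕ) + (b : ℕ) := by rw [e1]; exact e4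
    exact h ⟨by omega, by omega⟩

end Helpers

/-- **Proposition 5.2 (prop:gf).**  (a) Each `f_{ij;k}` lies in the centralizer `g^f`;
(b) the `f_{ij;k}` form a basis of `g^f` dual to the basis `{E_{(j,1),(i,pᵢ−k)}}` of `U`
with respect to the trace form:
`tr(E_{(j,1),(i,pᵢ−k)} · f_{i'j';k'}) = δ_{ii'}δ_{jj'}δ_{kk'}`; in particular the
`f_{ij;k}` span the centralizer of `f`. -/
theorem statement12 {F : Type*} [Field F] [CharZero F] {N r : ℕ} (p : Fin r → ℕ)
    (hp : ∀ i, 0 < p i) (hsort : ∀ i j : Fin r, i ≤ j → p j ≤ p i)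
    (hN : ∑ i, p i = N) :
    (∀ (i j : Fin r) (k : ℕ) (hk : k < min (p i) (p j)),
        shiftNil F p * fEl F p i j k hk = fEl F p i j k hk * shiftNil F p) ∧
    (∀ (i j : Fin r) (k : ℕ) (hk : k < min (p i) (p j))
        (i' j' : Fin r) (k' : ℕ) (hk' : k' < min (p i') (p j')),
        Matrix.trace (uEl F p i j k hk * fEl F p i' j' k' hk') =
          if i = i' ∧ j = j' ∧ k = k' then 1 else 0) ∧
    (∀ x : Matrix (GIdx p) (GIdx p) F, shiftNil F p * x = x * shiftNil F p →
        x ∈ Submodule.span F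
          {A | ∃ (i j : Fin r) (k : ℕ) (hk : k < min (p i) (p j)), A = fEl F p i j k hk}) := by
  refine ⟨fun i j k hk => fEl_comm i j k hk, ?_, ?_⟩
  · -- part (b)
    intro i j k hk i' j' k' hk'
    unfold uEl
    unfold Matrix.trace
    rw [Fintype.sum_eq_single (⟨j, ⟨0, by have := hp j; omega⟩⟩ : GIdx p)]
    · rw [Matrix.diag_apply, Matrix.single_mul_apply_same, one_mul, fEl_apply]
      refine if_congr ?_ rfl rfl
      constructor
      · rintro ⟨e1, e2, -, e4⟩
        simp only at e1 e2 e4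
        subst e1; subst e2
        refine ⟨rfl, rfl, ?_⟩
        have h1 : k < p i := lt_of_lt_of_le hk (min_le_left _ _)
        have h2 : k' < p i := lt_of_lt_of_le hk' (min_le_left _ _)
        omega
      · rintro ⟨rfl, rfl, rfl⟩
        exact ⟨rfl, rfl, Nat.zero_le k, show p i - 1 - k = p i - 1 - k + 0 from
          (Nat.add_zero _).symm⟩
    · intro u hu
      rw [Matrix.diag_apply, Matrix.single_mul_apply_of_ne]
      exact hu
  · -- part (c)
    intro x hx
    have hxS : x = ∑ i' : Fin r, ∑ j' : Fin r, ∑ k : Fin (min (p i') (p j')),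
        x ⟨i', ⟨p i' - 1, by have := hp i'; omega⟩⟩
          ⟨j', ⟨(k : ℕ), by have := k.isLt; omega⟩⟩ • fEl F p i' j' (k : ℕ) k.isLt := by
      set S := ∑ i' : Fin r, ∑ j' : Fin r, ∑ k : Fin (min (p i') (p j')),
        x ⟨i', ⟨p i' - 1, by have := hp i'; omega⟩⟩
          ⟨j', ⟨(k : ℕ), by have := k.isLt; omega⟩⟩ • fEl F p i' j' (k : ℕ) k.isLt with hS
      have hScomm : shiftNil F p * S = S * shiftNil F p := by
        rw [hS]
        simp only [Finset.mul_sum, Finset.sum_mul, Matrix.mul_smul, Matrix.smul_mul]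
        refine Finset.sum_congr rfl fun i' _ => Finset.sum_congr rfl fun j' _ =>
          Finset.sum_congr rfl fun k _ => ?_
        rw [fEl_comm]
      have hsub : shiftNil F p * (x - S) = (x - S) * shiftNil F p := by
        rw [Matrix.mul_sub, Matrix.sub_mul, hx, hScomm]
      have hz : x - S = 0 := by
        apply zero_of hsub hp
        intro i j b hb
        have hpi := hp i
        have hpj := hp j
        have hB := bigS_apply x hp i j (p i - 1) (by omega) b (by omega)
        rw [dif_pos (show b ≤ p i - 1 ∧ p i - 1 - (p i - 1) + b < p j from
          ⟨by omega, by omega⟩)] at hB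
        rw [Matrix.sub_apply, hS, hB]
        have e := xcongr x (show p i - 1 < p i by omega) (show p i - 1 < p i by omega)
          (show p i - 1 - (p i - 1) + b < p j by omega) (show b < p j by omega) rfl
          (show p i - 1 - (p i - 1) + b = b by omega)
        rw [e]
        exact sub_self _
      exact (sub_eq_zero.mp hz)
    rw [hxS]
    refine Submodule.sum_mem _ fun i' _ => Submodule.sum_mem _ fun j' _ =>
      Submodule.sum_mem _ fun k _ => Submodule.smul_mem _ _
        (Submodule.subset_span ⟨i', j', (k : ℕ), k.isLt, rfl⟩)
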